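/- Let ε ∈ (0, 1) and let ε ≤ t₁ < t₂ ≤ 1. Then the spiral map satisfies ‖g_ε(t₁) − g_ε(t₂)‖ ≤ (t₂ − t₁)·√(1 + (π/ln(1/ε))²) ≤ (t₂ − t₁)·(1 + π²/(2·ln²(1/ε))). -/

import Mathlib

/-- The point `(a, b) ∈ ℝ²` (Euclidean plane). -/
noncomputable def pt (a b : ℝ) : EuclideanSpace ℝ (Fin 2) :=
  (WithLp.equiv 2 (Fin 2 → ℝ)).symm ![a, b]

/-- The angle `φ_ε(t) = π ln(1/|t|) / ln(1/ε)`. -/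
noncomputable def spiralPhi (ε t : ℝ) : ℝ :=
  Real.pi * Real.log (1 / |t|) / Real.log (1 / ε)

/-- The spiral map `g_ε : ℝ → ℝ²`. -/
noncomputable def spiral (ε t : ℝ) : EuclideanSpace ℝ (Fin 2) :=
  if 1 ≤ |t| then pt t 0
  else if |t| ≤ ε then pt (-t) 0
  else pt (t * Real.cos (spiralPhi ε t)) (t * Real.sin (spiralPhi ε t))

lemma pt_smul_add (a b : ℝ) : a • pt 1 0 + b • pt 0 1 = pt a b := by
  ext i; fin_cases i <;> simp [pt]

lemma norm_pt (a b : ℝ) : ‖pt a b‖ = Real.sqrt (a ^ 2 + b ^ 2) := by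
  rw [EuclideanSpace.norm_eq]
  simp [pt, Fin.sum_univ_two, Real.norm_eq_abs, sq_abs]

/-- Helper helix curve. -/
noncomputable def helix (c t : ℝ) : EuclideanSpace ℝ (Fin 2) :=
  pt (t * Real.cos (c * Real.log t)) (t * Real.sin (c * Real.log t))

lemma hasDerivAt_helix (c t : ℝ) (ht : 0 < t) :
    HasDerivAt (helix c)
      (pt (Real.cos (c * Real.log t) - c * Real.sin (c * Real.log t))
          (Real.sin (c * Real.log t) + c * Real.cos (c * Real.log t))) t := by
  have hθ : HasDerivAt (fun s => c * Real.log s) (c * t⁻¹) t :=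
    (Real.hasDerivAt_log ht.ne').const_mul c
  have hA : HasDerivAt (fun s => s * Real.cos (c * Real.log s))
      (Real.cos (c * Real.log t) - c * Real.sin (c * Real.log t)) t := by
    have := (hasDerivAt_id' t).mul hθ.cos
    refine this.congr_deriv ?_
    field_simp
    ring
  have hB : HasDerivAt (fun s => s * Real.sin (c * Real.log s))
      (Real.sin (c * Real.log t) + c * Real.cos (c * Real.log t)) t := by
    have := (hasDerivAt_id' t).mul hθ.sin
    refine this.congr_deriv ?_
    rw [show t * (Real.cos (c * Real.log t) * (c * t⁻¹)) = c * Real.cos (c * Real.log t) by field_simp]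
    ring
  have key := (hA.smul_const (pt 1 0)).add (hB.smul_const (pt 0 1))
  rw [pt_smul_add] at key
  have hfun : helix c = fun s =>
      (s * Real.cos (c * Real.log s)) • pt 1 0 + (s * Real.sin (c * Real.log s)) • pt 0 1 := by
    funext s; rw [pt_smul_add]; rfl
  rw [hfun]
  exact key

/-- **The spiral map does not expand distances much on `[ε, 1]`.** For `ε ∈ (0,1)` and
`ε ≤ t₁ < t₂ ≤ 1`,
`‖g_ε t₁ - g_ε t₂‖ ≤ (t₂ - t₁) √(1 + (π/ln(1/ε))²) ≤ (t₂ - t₁)(1 + π²/(2 ln²(1/ε)))`. -/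
theorem spiral_expansion_bound (ε : ℝ) (hε : 0 < ε) (hε1 : ε < 1)
    (t₁ t₂ : ℝ) (h₁ : ε ≤ t₁) (h₁₂ : t₁ < t₂) (h₂ : t₂ ≤ 1) :
    ‖spiral ε t₁ - spiral ε t₂‖ ≤
      (t₂ - t₁) * Real.sqrt (1 + (Real.pi / Real.log (1 / ε)) ^ 2) ∧
    (t₂ - t₁) * Real.sqrt (1 + (Real.pi / Real.log (1 / ε)) ^ 2) ≤
      (t₂ - t₁) * (1 + Real.pi ^ 2 / (2 * (Real.log (1 / ε)) ^ 2)) := by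
  set L : ℝ := Real.log (1 / ε) with hLdef
  have hLε : L = -Real.log ε := by rw [hLdef, one_div, Real.log_inv]
  have hL : 0 < L := by rw [hLε]; linarith [Real.log_neg hε hε1]
  set c : ℝ := -(Real.pi / L) with hcdef
  -- spiral agrees with helix c on [ε, 1]
  have heq : ∀ t ∈ Set.Icc ε 1, spiral ε t = helix c t := by
    rintro t ⟨ht1, ht2⟩
    have ht0 : 0 < t := lt_of_lt_of_le hε ht1
    have habs : |t| = t := abs_of_pos ht0
    unfold spiral
    split_ifs with hb1 hb2
    · have ht : t = 1 := le_antisymm ht2 (by rwa [habs] at hb1)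
      subst ht
      simp [helix]
    · have ht : t = ε := le_antisymm (by rwa [habs] at hb2) ht1
      subst ht
      have hlog : c * Real.log t = Real.pi := by
        have h0 : Real.log t ≠ 0 := (Real.log_neg hε hε1).ne
        rw [hcdef, hLε]
        field_simp
      unfold helix
      rw [hlog, Real.cos_pi, Real.sin_pi]
      ring_nf
    · have hphi : spiralPhi ε t = c * Real.log t := by
        rw [spiralPhi, habs, one_div, Real.log_inv, hcdef]
        ring
      rw [helix, hphi]
  -- derivative bound
  have hC : ∀ t ∈ Set.Icc ε 1,
      ‖pt (Real.cos (c * Real.log t) - c * Real.sin (c * Real.log t))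
          (Real.sin (c * Real.log t) + c * Real.cos (c * Real.log t))‖
        = Real.sqrt (1 + (Real.pi / L) ^ 2) := by
    intro t _
    rw [norm_pt]
    congr 1
    have := Real.sin_sq_add_cos_sq (c * Real.log t)
    have hc2 : c ^ 2 = (Real.pi / L) ^ 2 := by rw [hcdef]; ring
    nlinarith [this, hc2]
  have hderiv : ∀ t ∈ Set.Icc ε 1,
      HasDerivWithinAt (spiral ε)
        (pt (Real.cos (c * Real.log t) - c * Real.sin (c * Real.log t))
            (Real.sin (c * Real.log t) + c * Real.cos (c * Real.log t))) (Set.Icc ε 1) t := by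
    intro t ht
    have ht0 : 0 < t := lt_of_lt_of_le hε ht.1
    exact ((hasDerivAt_helix c t ht0).hasDerivWithinAt).congr heq (heq t ht)
  have hmv := Convex.norm_image_sub_le_of_norm_hasDerivWithin_le
    (f := spiral ε)
    (f' := fun t => pt (Real.cos (c * Real.log t) - c * Real.sin (c * Real.log t))
      (Real.sin (c * Real.log t) + c * Real.cos (c * Real.log t)))
    (C := Real.sqrt (1 + (Real.pi / L) ^ 2))
    hderiv (fun t ht => le_of_eq (hC t ht)) (convex_Icc ε 1)
    (Set.mem_Icc.2 ⟨le_trans h₁ h₁₂.le, h₂⟩) (Set.mem_Icc.2 ⟨h₁, h₁₂.le.trans h₂⟩)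
  constructor
  · have hnorm : ‖t₁ - t₂‖ = t₂ - t₁ := by
      rw [Real.norm_eq_abs, abs_sub_comm, abs_of_pos (by linarith)]
    rw [norm_sub_rev]
    calc ‖spiral ε t₂ - spiral ε t₁‖
        ≤ Real.sqrt (1 + (Real.pi / L) ^ 2) * ‖t₁ - t₂‖ := by
          rw [norm_sub_rev]; exact hmv
      _ = (t₂ - t₁) * Real.sqrt (1 + (Real.pi / L) ^ 2) := by rw [hnorm]; ring
  · have hx : Real.sqrt (1 + (Real.pi / L) ^ 2)
        ≤ 1 + Real.pi ^ 2 / (2 * L ^ 2) := by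
      have h1 : 1 + (Real.pi / L) ^ 2 ≤ (1 + Real.pi ^ 2 / (2 * L ^ 2)) ^ 2 := by
        have : (Real.pi / L) ^ 2 = Real.pi ^ 2 / L ^ 2 := by ring
        rw [this]
        have hL2 : (0:ℝ) < L ^ 2 := by positivity
        rw [div_pow] at *
        field_simp
        nlinarith [sq_nonneg (Real.pi ^ 2), sq_nonneg L, sq_nonneg (Real.pi^2 * L)]
      calc Real.sqrt (1 + (Real.pi / L) ^ 2)
          ≤ Real.sqrt ((1 + Real.pi ^ 2 / (2 * L ^ 2)) ^ 2) := Real.sqrt_le_sqrt h1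
        _ = 1 + Real.pi ^ 2 / (2 * L ^ 2) := Real.sqrt_sq (by positivity)
    exact mul_le_mul_of_nonneg_left hx (by linarith)
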